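/- Let A be an associative unital algebra over ℂ with a comultiplication Δ whose right leg is all of A, and let h ∈ A be a left cointegral such that the left leg of Δ(h) is all of A. Then the linear map T₂ : A ⊗ A → A ⊗ A determined by T₂(a ⊗ b) = (a ⊗ 1)Δ(b) is injective. -/

import Mathlib

open TensorProduct

noncomputable section

variable {A : Type*} [Ring A] [Algebra ℂ A]

/-- The slice map `id ⊗ ω : A ⊗ A → A`. -/
def sliceR (ω : A →ₗ[ℂ] ℂ) : A ⊗[ℂ] A →ₗ[ℂ] A :=
  (TensorProduct.rid ℂ A).toLinearMap ∘ₗ TensorProduct.map LinearMap.id ω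

/-- The slice map `ω ⊗ id : A ⊗ A → A`. -/
def sliceL (ω : A →ₗ[ℂ] ℂ) : A ⊗[ℂ] A →ₗ[ℂ] A :=
  (TensorProduct.lid ℂ A).toLinearMap ∘ₗ TensorProduct.map ω LinearMap.id

/-- Coassociativity of a comultiplication `Δ : A → A ⊗ A`:
`(Δ ⊗ id) ∘ Δ = (id ⊗ Δ) ∘ Δ` (up to the associator). -/
def IsCoassoc (Δ : A →ₐ[ℂ] A ⊗[ℂ] A) : Prop :=
  ∀ a : A,
    TensorProduct.assoc ℂ A A A (TensorProduct.map Δ.toLinearMap LinearMap.id (Δ a)) =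
      TensorProduct.map LinearMap.id Δ.toLinearMap (Δ a)

/-- A left integral: a nonzero functional with `(id ⊗ φ)(Δ a) = φ(a)·1` for all `a`. -/
def IsLeftIntegral (Δ : A →ₐ[ℂ] A ⊗[ℂ] A) (φ : A →ₗ[ℂ] ℂ) : Prop :=
  φ ≠ 0 ∧ ∀ a : A, sliceR φ (Δ a) = φ a • (1 : A)

/-- A right integral: a nonzero functional with `(ψ ⊗ id)(Δ a) = ψ(a)·1` for all `a`. -/
def IsRightIntegral (Δ : A →ₐ[ℂ] A ⊗[ℂ] A) (ψ : A →ₗ[ℂ] ℂ) : Prop :=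
  ψ ≠ 0 ∧ ∀ a : A, sliceL ψ (Δ a) = ψ a • (1 : A)

/-- A faithful functional: the bilinear form `(a, b) ↦ ω(ab)` is non-degenerate. -/
def IsFaithful (ω : A →ₗ[ℂ] ℂ) : Prop :=
  (∀ b : A, (∀ a : A, ω (a * b) = 0) → b = 0) ∧
  (∀ b : A, (∀ a : A, ω (b * a) = 0) → b = 0)

/-- The left leg of an element `x ∈ A ⊗ A`: the span of `{(id ⊗ ω)(x) : ω ∈ A*}`. -/
def leftLegOf (x : A ⊗[ℂ] A) : Submodule ℂ A :=
  Submodule.span ℂ {y : A | ∃ ω : A →ₗ[ℂ] ℂ, y = sliceR ω x}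

/-- The right leg of an element `x ∈ A ⊗ A`: the span of `{(ω ⊗ id)(x) : ω ∈ A*}`. -/
def rightLegOf (x : A ⊗[ℂ] A) : Submodule ℂ A :=
  Submodule.span ℂ {y : A | ∃ ω : A →ₗ[ℂ] ℂ, y = sliceL ω x}

/-- The left leg of `Δ`: the span of `{(id ⊗ ω)(Δ a) : a ∈ A, ω ∈ A*}`. -/
def leftLeg (Δ : A →ₐ[ℂ] A ⊗[ℂ] A) : Submodule ℂ A :=
  Submodule.span ℂ {y : A | ∃ (a : A) (ω : A →ₗ[ℂ] ℂ), y = sliceR ω (Δ a)}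

/-- The right leg of `Δ`: the span of `{(ω ⊗ id)(Δ a) : a ∈ A, ω ∈ A*}`. -/
def rightLeg (Δ : A →ₐ[ℂ] A ⊗[ℂ] A) : Submodule ℂ A :=
  Submodule.span ℂ {y : A | ∃ (a : A) (ω : A →ₗ[ℂ] ℂ), y = sliceL ω (Δ a)}

/-- A comultiplication is full if both of its legs are all of `A`. -/
def IsFull (Δ : A →ₐ[ℂ] A ⊗[ℂ] A) : Prop :=
  leftLeg Δ = ⊤ ∧ rightLeg Δ = ⊤

/-- The linear map `T₁` with `T₁ (a ⊗ b) = Δ(a) * (1 ⊗ b)`. -/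
def T1 (Δ : A →ₐ[ℂ] A ⊗[ℂ] A) : A ⊗[ℂ] A →ₗ[ℂ] A ⊗[ℂ] A :=
  LinearMap.mul' ℂ (A ⊗[ℂ] A) ∘ₗ
    TensorProduct.map Δ.toLinearMap (TensorProduct.mk ℂ A A 1)

/-- The linear map `T₁'` with `T₁' (a ⊗ b) = Δ(a) * (b ⊗ 1)`. -/
def T1' (Δ : A →ₐ[ℂ] A ⊗[ℂ] A) : A ⊗[ℂ] A →ₗ[ℂ] A ⊗[ℂ] A :=
  LinearMap.mul' ℂ (A ⊗[ℂ] A) ∘ₗ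
    TensorProduct.map Δ.toLinearMap ((TensorProduct.mk ℂ A A).flip 1)

/-- The linear map `T₂` with `T₂ (a ⊗ b) = (a ⊗ 1) * Δ(b)`. -/
def T2 (Δ : A →ₐ[ℂ] A ⊗[ℂ] A) : A ⊗[ℂ] A →ₗ[ℂ] A ⊗[ℂ] A :=
  LinearMap.mul' ℂ (A ⊗[ℂ] A) ∘ₗ
    TensorProduct.map ((TensorProduct.mk ℂ A A).flip 1) Δ.toLinearMap

/-- The linear map `T₂'` with `T₂' (a ⊗ b) = (1 ⊗ a) * Δ(b)`. -/
def T2' (Δ : A →ₐ[ℂ] A ⊗[ℂ] A) : A ⊗[ℂ] A →ₗ[ℂ] A ⊗[ℂ] A :=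
  LinearMap.mul' ℂ (A ⊗[ℂ] A) ∘ₗ
    TensorProduct.map (TensorProduct.mk ℂ A A 1) Δ.toLinearMap

/-- A left cointegral: a nonzero element `h` with `Δ(a)(1 ⊗ h) = a ⊗ h` for all `a`. -/
def IsLeftCointegral (Δ : A →ₐ[ℂ] A ⊗[ℂ] A) (h : A) : Prop :=
  h ≠ 0 ∧ ∀ a : A, Δ a * ((1 : A) ⊗ₜ[ℂ] h) = a ⊗ₜ[ℂ] h

/-- A right cointegral: a nonzero element `k` with `(k ⊗ 1)Δ(a) = k ⊗ a` for all `a`. -/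
def IsRightCointegral (Δ : A →ₐ[ℂ] A ⊗[ℂ] A) (k : A) : Prop :=
  k ≠ 0 ∧ ∀ a : A, (k ⊗ₜ[ℂ] (1 : A)) * Δ a = k ⊗ₜ[ℂ] a

/-- `Δ₁₃(a) = (1 ⊗ σ)(Δ(a) ⊗ 1)`, viewed in `A ⊗ (A ⊗ A)`. -/
def delta13 (Δ : A →ₐ[ℂ] A ⊗[ℂ] A) (a : A) : A ⊗[ℂ] (A ⊗[ℂ] A) :=
  TensorProduct.map LinearMap.id (TensorProduct.comm ℂ A A).toLinearMap
    (TensorProduct.assoc ℂ A A A (Δ a ⊗ₜ[ℂ] (1 : A)))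

section Aux

open TensorProduct LinearMap

namespace T2InjAux

variable {M N : Type*} [AddCommGroup M] [Module ℂ M] [AddCommGroup N] [Module ℂ N]

/-- Generic right slice `id ⊗ ω : M ⊗ N → M`. -/
noncomputable def slr (ω : N →ₗ[ℂ] ℂ) : M ⊗[ℂ] N →ₗ[ℂ] M :=
  (TensorProduct.rid ℂ M).toLinearMap ∘ₗ LinearMap.lTensor M ω

@[simp] lemma slr_tmul (ω : N →ₗ[ℂ] ℂ) (m : M) (n : N) :
    slr ω (m ⊗ₜ[ℂ] n) = ω n • m := by
  simp [slr]

/-- Generic left slice `ρ ⊗ id : M ⊗ N → N`. -/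
noncomputable def sll (ρ : M →ₗ[ℂ] ℂ) : M ⊗[ℂ] N →ₗ[ℂ] N :=
  (TensorProduct.lid ℂ N).toLinearMap ∘ₗ LinearMap.rTensor N ρ

@[simp] lemma sll_tmul (ρ : M →ₗ[ℂ] ℂ) (m : M) (n : N) :
    sll ρ (m ⊗ₜ[ℂ] n) = ρ m • n := by
  simp [sll]

lemma slr_sep (u : M ⊗[ℂ] N) (H : ∀ ω : N →ₗ[ℂ] ℂ, slr ω u = 0) : u = 0 := by
  classical
  let b := Module.Basis.ofVectorSpace ℂ N
  let e : M ⊗[ℂ] N ≃ₗ[ℂ] _ :=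
    (TensorProduct.congr (LinearEquiv.refl ℂ M) b.repr).trans
      (TensorProduct.finsuppScalarRight ℂ ℂ M _)
  have key : ∀ (u : M ⊗[ℂ] N) (i), e u i = slr (b.coord i) u := by
    intro u
    induction u using TensorProduct.induction_on with
    | zero => intro i; simp
    | tmul m n =>
        intro i
        simp only [e, LinearEquiv.trans_apply, TensorProduct.congr_tmul,
          LinearEquiv.refl_apply, TensorProduct.finsuppScalarRight_apply_tmul_apply,
          slr_tmul, Module.Basis.coord_apply]
    | add x y hx hy =>
        intro i
        simp only [map_add, Finsupp.add_apply, hx, hy]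
  have he : e u = 0 := by
    ext i
    rw [key]
    simp [H]
  exact (LinearEquiv.map_eq_zero_iff e).mp he

lemma sll_eq_slr_comm (ρ : M →ₗ[ℂ] ℂ) (u : M ⊗[ℂ] N) :
    sll ρ u = slr ρ (TensorProduct.comm ℂ M N u) := by
  induction u using TensorProduct.induction_on with
  | zero => simp
  | tmul m n => simp
  | add x y hx hy => simp [map_add, hx, hy]

lemma sll_sep (u : M ⊗[ℂ] N) (H : ∀ ρ : M →ₗ[ℂ] ℂ, sll ρ u = 0) : u = 0 := by
  have : TensorProduct.comm ℂ M N u = 0 := by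
    apply slr_sep
    intro ω
    rw [← sll_eq_slr_comm, H]
  exact (LinearEquiv.map_eq_zero_iff _).mp this

lemma tmul_right_cancel {h : M} (hne : h ≠ 0) (v : N) (H : h ⊗ₜ[ℂ] v = 0) : v = 0 := by
  obtain ⟨φ, hφ⟩ : ∃ φ : M →ₗ[ℂ] ℂ, φ h ≠ 0 := by
    by_contra hc
    push_neg at hc
    exact hne ((Module.forall_dual_apply_eq_zero_iff ℂ h).mp hc)
  have := congrArg (sll (N := N) φ) H
  rw [sll_tmul, map_zero] at this
  simpa [smul_eq_zero, hφ] using this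

end T2InjAux

end Aux

section Main

open TensorProduct LinearMap T2InjAux

variable (Δ : A →ₐ[ℂ] A ⊗[ℂ] A)

@[simp] lemma sliceL_tmul (ρ : A →ₗ[ℂ] ℂ) (a b : A) :
    sliceL ρ (a ⊗ₜ[ℂ] b) = ρ a • b := by simp [sliceL]

@[simp] lemma sliceR_tmul (ω : A →ₗ[ℂ] ℂ) (a b : A) :
    sliceR ω (a ⊗ₜ[ℂ] b) = ω b • a := by simp [sliceR]

@[simp] lemma T2_tmul (a b : A) :
    T2 Δ (a ⊗ₜ[ℂ] b) = (a ⊗ₜ[ℂ] (1 : A)) * Δ b := by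
  simp [T2]

-- bridging: linear assoc is multiplicative
lemma assoc_mul (u v : (A ⊗[ℂ] A) ⊗[ℂ] A) :
    TensorProduct.assoc ℂ A A A (u * v) =
      TensorProduct.assoc ℂ A A A u * TensorProduct.assoc ℂ A A A v :=
  map_mul (Algebra.TensorProduct.assoc ℂ ℂ ℂ A A A) u v

lemma assoc_symm_mul (u v : A ⊗[ℂ] (A ⊗[ℂ] A)) :
    (TensorProduct.assoc ℂ A A A).symm (u * v) =
      (TensorProduct.assoc ℂ A A A).symm u * (TensorProduct.assoc ℂ A A A).symm v :=
  map_mul (Algebra.TensorProduct.assoc ℂ ℂ ℂ A A A).symm u v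

-- bridging: map Dl id and map id Dl are multiplicative
lemma mapDid_mul (u v : A ⊗[ℂ] A) :
    TensorProduct.map Δ.toLinearMap LinearMap.id (u * v) =
      TensorProduct.map Δ.toLinearMap LinearMap.id u *
      TensorProduct.map Δ.toLinearMap LinearMap.id v :=
  map_mul (Algebra.TensorProduct.map Δ (AlgHom.id ℂ A)) u v

lemma mapidD_mul (u v : A ⊗[ℂ] A) :
    TensorProduct.map LinearMap.id Δ.toLinearMap (u * v) =
      TensorProduct.map LinearMap.id Δ.toLinearMap u *
      TensorProduct.map LinearMap.id Δ.toLinearMap v :=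
  map_mul (Algebra.TensorProduct.map (AlgHom.id ℂ A) Δ) u v

end Main

section Step2

open TensorProduct LinearMap T2InjAux

variable (Δ : A →ₐ[ℂ] A ⊗[ℂ] A)

lemma Delta_sliceL (ρ : A →ₗ[ℂ] ℂ) (w : A ⊗[ℂ] A) :
    Δ (sliceL ρ w) = sll ρ (TensorProduct.map LinearMap.id Δ.toLinearMap w) := by
  induction w using TensorProduct.induction_on with
  | zero => simp
  | tmul p q => simp
  | add x y hx hy => simp [map_add, hx, hy]

lemma Delta_sliceR (ω : A →ₗ[ℂ] ℂ) (w : A ⊗[ℂ] A) :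
    Δ (sliceR ω w) = slr ω (TensorProduct.map Δ.toLinearMap LinearMap.id w) := by
  induction w using TensorProduct.induction_on with
  | zero => simp
  | tmul p q => simp
  | add x y hx hy => simp [map_add, hx, hy]

lemma sll_mul (ρ : A →ₗ[ℂ] ℂ) (u : A ⊗[ℂ] (A ⊗[ℂ] A)) (y : A ⊗[ℂ] A) :
    sll ρ u * y = sll ρ (u * ((1 : A) ⊗ₜ[ℂ] y)) := by
  induction u using TensorProduct.induction_on with
  | zero => simp
  | tmul m v =>
      rw [Algebra.TensorProduct.tmul_mul_tmul, sll_tmul, sll_tmul, mul_one, smul_mul_assoc]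
  | add x y' hx hy => simp only [map_add, add_mul, hx, hy]

lemma mul_slr (ω : A →ₗ[ℂ] ℂ) (y : A ⊗[ℂ] A) (w : (A ⊗[ℂ] A) ⊗[ℂ] A) :
    y * slr ω w = slr ω ((y ⊗ₜ[ℂ] (1 : A)) * w) := by
  induction w using TensorProduct.induction_on with
  | zero => simp
  | tmul u q =>
      rw [Algebra.TensorProduct.tmul_mul_tmul, slr_tmul, slr_tmul, one_mul, mul_smul_comm]
  | add x y' hx hy => simp only [map_add, mul_add, hx, hy]

variable {h : A}

lemma step2e (hco : ∀ a : A, Δ a * ((1 : A) ⊗ₜ[ℂ] h) = a ⊗ₜ[ℂ] h) (w : A ⊗[ℂ] A) :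
    TensorProduct.map Δ.toLinearMap LinearMap.id w * (((1 : A) ⊗ₜ[ℂ] h) ⊗ₜ[ℂ] (1 : A)) =
      TensorProduct.map ((TensorProduct.mk ℂ A A).flip h) LinearMap.id w := by
  induction w using TensorProduct.induction_on with
  | zero => simp
  | tmul p q =>
      simp only [TensorProduct.map_tmul, LinearMap.id_coe, id_eq,
        Algebra.TensorProduct.tmul_mul_tmul, mul_one, LinearMap.flip_apply,
        TensorProduct.mk_apply, AlgHom.toLinearMap_apply, hco p]
  | add x y hx hy => simp only [map_add, add_mul, hx, hy]

lemma step2g (ρ : A →ₗ[ℂ] ℂ) (w : A ⊗[ℂ] A) :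
    sll ρ (TensorProduct.assoc ℂ A A A
        (TensorProduct.map ((TensorProduct.mk ℂ A A).flip h) LinearMap.id w)) =
      h ⊗ₜ[ℂ] sliceL ρ w := by
  induction w using TensorProduct.induction_on with
  | zero => rw [map_zero, LinearEquiv.map_zero, map_zero, map_zero, TensorProduct.tmul_zero]
  | tmul p q =>
      simp only [TensorProduct.map_tmul, LinearMap.flip_apply, TensorProduct.mk_apply,
        LinearMap.id_coe, id_eq, TensorProduct.assoc_tmul, sll_tmul, sliceL_tmul,
        TensorProduct.tmul_smul]
  | add x y hx hy => simp only [map_add, hx, hy, TensorProduct.tmul_add]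

lemma step2 (hΔ : IsCoassoc Δ) (hco : ∀ a : A, Δ a * ((1 : A) ⊗ₜ[ℂ] h) = a ⊗ₜ[ℂ] h)
    (hleg : rightLeg Δ = ⊤) (c : A) :
    Δ c * (h ⊗ₜ[ℂ] (1 : A)) = h ⊗ₜ[ℂ] c := by
  have hgen : ∀ (a : A) (ρ : A →ₗ[ℂ] ℂ),
      Δ (sliceL ρ (Δ a)) * (h ⊗ₜ[ℂ] (1 : A)) = h ⊗ₜ[ℂ] sliceL ρ (Δ a) := by
    intro a ρ
    calc Δ (sliceL ρ (Δ a)) * (h ⊗ₜ[ℂ] (1 : A))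
        = sll ρ (TensorProduct.map LinearMap.id Δ.toLinearMap (Δ a)) * (h ⊗ₜ[ℂ] (1 : A)) := by
          rw [Delta_sliceL]
      _ = sll ρ (TensorProduct.map LinearMap.id Δ.toLinearMap (Δ a) *
            ((1 : A) ⊗ₜ[ℂ] (h ⊗ₜ[ℂ] (1 : A)))) := sll_mul _ _ _
      _ = sll ρ (TensorProduct.assoc ℂ A A A
            (TensorProduct.map Δ.toLinearMap LinearMap.id (Δ a)) *
            TensorProduct.assoc ℂ A A A (((1 : A) ⊗ₜ[ℂ] h) ⊗ₜ[ℂ] (1 : A))) := by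
          rw [hΔ a, TensorProduct.assoc_tmul]
      _ = sll ρ (TensorProduct.assoc ℂ A A A
            (TensorProduct.map Δ.toLinearMap LinearMap.id (Δ a) *
              (((1 : A) ⊗ₜ[ℂ] h) ⊗ₜ[ℂ] (1 : A)))) := by rw [assoc_mul]
      _ = sll ρ (TensorProduct.assoc ℂ A A A
            (TensorProduct.map ((TensorProduct.mk ℂ A A).flip h) LinearMap.id (Δ a))) := by
          rw [step2e Δ hco]
      _ = h ⊗ₜ[ℂ] sliceL ρ (Δ a) := step2g ρ _
  let S : Submodule ℂ A :=
    { carrier := {c | Δ c * (h ⊗ₜ[ℂ] (1 : A)) = h ⊗ₜ[ℂ] c}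
      add_mem' := fun {x y} hx hy => by
        simp only [Set.mem_setOf_eq] at *
        rw [map_add, add_mul, hx, hy, TensorProduct.tmul_add]
      zero_mem' := by simp
      smul_mem' := fun r x hx => by
        simp only [Set.mem_setOf_eq] at *
        rw [map_smul, smul_mul_assoc, hx, TensorProduct.tmul_smul] }
  have hsub : rightLeg Δ ≤ S := Submodule.span_le.mpr (by
    rintro y ⟨a, ρ, rfl⟩
    exact hgen a ρ)
  exact hsub (hleg ▸ Submodule.mem_top)

lemma step3 (hΔ : IsCoassoc Δ) (hco : ∀ a : A, Δ a * ((1 : A) ⊗ₜ[ℂ] h) = a ⊗ₜ[ℂ] h)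
    (hleg : rightLeg Δ = ⊤) (ω : A →ₗ[ℂ] ℂ) (b : A) :
    sliceR ω (Δ b) * h = ω b • h := by
  have e1 : ∀ u : A ⊗[ℂ] A, sliceR ω (u * (h ⊗ₜ[ℂ] (1 : A))) = sliceR ω u * h := by
    intro u
    induction u using TensorProduct.induction_on with
    | zero => simp
    | tmul p q =>
        rw [Algebra.TensorProduct.tmul_mul_tmul, mul_one, sliceR_tmul, sliceR_tmul,
          smul_mul_assoc]
    | add x y hx hy => simp only [map_add, add_mul, hx, hy]
  have := congrArg (sliceR ω) (step2 Δ hΔ hco hleg b)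
  rw [e1] at this
  simpa using this

lemma stepA (hΔ : IsCoassoc Δ) (hco : ∀ a : A, Δ a * ((1 : A) ⊗ₜ[ℂ] h) = a ⊗ₜ[ℂ] h)
    (hleg : rightLeg Δ = ⊤) (x : A ⊗[ℂ] A) :
    T2 Δ x * (h ⊗ₜ[ℂ] (1 : A)) =
      TensorProduct.map (LinearMap.mulRight ℂ h) LinearMap.id x := by
  induction x using TensorProduct.induction_on with
  | zero => simp
  | tmul a b =>
      rw [T2_tmul, TensorProduct.map_tmul, mul_assoc, step2 Δ hΔ hco hleg,
        Algebra.TensorProduct.tmul_mul_tmul, one_mul]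
      simp
  | add x y hx hy => simp only [map_add, add_mul, hx, hy]

end Step2

section Step1

open TensorProduct LinearMap T2InjAux

variable (Δ : A →ₐ[ℂ] A ⊗[ℂ] A)

/-- `S_ω = (id ⊗ ω) ∘ Δ`. -/
noncomputable def Sw (ω : A →ₗ[ℂ] ℂ) : A →ₗ[ℂ] A := sliceR ω ∘ₗ Δ.toLinearMap

@[simp] lemma Sw_apply (ω : A →ₗ[ℂ] ℂ) (b : A) : Sw Δ ω b = sliceR ω (Δ b) := rfl

lemma step1_4d (a : A) (u : A ⊗[ℂ] A) :
    (a ⊗ₜ[ℂ] (1 : A ⊗[ℂ] A)) * TensorProduct.map LinearMap.id Δ.toLinearMap u =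
      TensorProduct.map LinearMap.id Δ.toLinearMap ((a ⊗ₜ[ℂ] (1 : A)) * u) := by
  induction u using TensorProduct.induction_on with
  | zero => simp
  | tmul p q =>
      simp only [TensorProduct.map_tmul, LinearMap.id_coe, id_eq,
        Algebra.TensorProduct.tmul_mul_tmul, one_mul, AlgHom.toLinearMap_apply]
  | add x y hx hy => simp only [map_add, mul_add, hx, hy]

lemma step1 (hΔ : IsCoassoc Δ) (ω : A →ₗ[ℂ] ℂ) (x : A ⊗[ℂ] A) :
    T2 Δ (LinearMap.lTensor A (Sw Δ ω) x) =
      slr ω ((TensorProduct.assoc ℂ A A A).symm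
        (TensorProduct.map LinearMap.id Δ.toLinearMap (T2 Δ x))) := by
  induction x using TensorProduct.induction_on with
  | zero => simp only [LinearMap.map_zero, LinearEquiv.map_zero]
  | tmul a b =>
      have hcs : TensorProduct.map Δ.toLinearMap LinearMap.id (Δ b) =
          (TensorProduct.assoc ℂ A A A).symm
            (TensorProduct.map LinearMap.id Δ.toLinearMap (Δ b)) := by
        rw [← hΔ b, LinearEquiv.symm_apply_apply]
      rw [LinearMap.lTensor_tmul, T2_tmul, Sw_apply, Delta_sliceR, mul_slr, hcs]
      rw [show ((a ⊗ₜ[ℂ] (1:A)) ⊗ₜ[ℂ] (1:A)) =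
        (TensorProduct.assoc ℂ A A A).symm (a ⊗ₜ[ℂ] (1 : A ⊗[ℂ] A)) by
          rw [Algebra.TensorProduct.one_def, TensorProduct.assoc_symm_tmul]]
      rw [← assoc_symm_mul, step1_4d, T2_tmul]
  | add x y hx hy => simp only [map_add, hx, hy]

end Step1

section StepII

open TensorProduct LinearMap T2InjAux

variable (Δ : A →ₐ[ℂ] A ⊗[ℂ] A)

/-- `Ψ_c(a ⊗ b) = Δ(a)(b ⊗ c)`. -/
noncomputable def Psi (c : A) : A ⊗[ℂ] A →ₗ[ℂ] A ⊗[ℂ] A :=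
  LinearMap.mul' ℂ (A ⊗[ℂ] A) ∘ₗ
    TensorProduct.map Δ.toLinearMap ((TensorProduct.mk ℂ A A).flip c)

@[simp] lemma Psi_tmul (c a b : A) : Psi Δ c (a ⊗ₜ[ℂ] b) = Δ a * (b ⊗ₜ[ℂ] c) := by
  simp [Psi]

lemma Psi_add (c c' : A) (x : A ⊗[ℂ] A) :
    Psi Δ (c + c') x = Psi Δ c x + Psi Δ c' x := by
  induction x using TensorProduct.induction_on with
  | zero => simp
  | tmul a b => simp only [Psi_tmul, TensorProduct.tmul_add, mul_add]
  | add x y hx hy => simp only [map_add, hx, hy]; abel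

lemma Psi_smul (r : ℂ) (c : A) (x : A ⊗[ℂ] A) :
    Psi Δ (r • c) x = r • Psi Δ c x := by
  induction x using TensorProduct.induction_on with
  | zero => simp
  | tmul a b => simp only [Psi_tmul, TensorProduct.tmul_smul, mul_smul_comm]
  | add x y hx hy => simp only [map_add, hx, hy, smul_add]

variable {h : A}

/-- `Ξ(a ⊗ b) = assoc(Δ(a) ⊗ 1) * (b ⊗ Δ(h))`. -/
noncomputable def Xi (h : A) : A ⊗[ℂ] A →ₗ[ℂ] A ⊗[ℂ] (A ⊗[ℂ] A) :=
  LinearMap.mul' ℂ (A ⊗[ℂ] (A ⊗[ℂ] A)) ∘ₗ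
    TensorProduct.map
      ((TensorProduct.assoc ℂ A A A).toLinearMap ∘ₗ
        ((TensorProduct.mk ℂ (A ⊗[ℂ] A) A).flip (1 : A)) ∘ₗ Δ.toLinearMap)
      ((TensorProduct.mk ℂ A (A ⊗[ℂ] A)).flip (Δ h))

@[simp] lemma Xi_tmul (a b : A) :
    Xi Δ h (a ⊗ₜ[ℂ] b) =
      TensorProduct.assoc ℂ A A A (Δ a ⊗ₜ[ℂ] (1 : A)) * (b ⊗ₜ[ℂ] Δ h) := by
  simp [Xi]

lemma stepii_5b (hco : ∀ a : A, Δ a * ((1 : A) ⊗ₜ[ℂ] h) = a ⊗ₜ[ℂ] h) (u : A ⊗[ℂ] A) :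
    TensorProduct.map LinearMap.id Δ.toLinearMap u * ((1 : A) ⊗ₜ[ℂ] Δ h) =
      TensorProduct.map LinearMap.id Δ.toLinearMap (u * ((1 : A) ⊗ₜ[ℂ] h)) := by
  induction u using TensorProduct.induction_on with
  | zero => simp
  | tmul p q =>
      simp only [TensorProduct.map_tmul, LinearMap.id_coe, id_eq, AlgHom.toLinearMap_apply,
        Algebra.TensorProduct.tmul_mul_tmul, mul_one, map_mul]
  | add x y hx hy => simp only [map_add, add_mul, hx, hy]

/-- key: `Ξ(x)` is computed from `T2(x)`. -/
lemma stepii_key (hΔ : IsCoassoc Δ)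
    (hco : ∀ a : A, Δ a * ((1 : A) ⊗ₜ[ℂ] h) = a ⊗ₜ[ℂ] h) (x : A ⊗[ℂ] A) :
    Xi Δ h x =
      TensorProduct.assoc ℂ A A A
          (TensorProduct.map Δ.toLinearMap LinearMap.id (T2 Δ x)) *
        ((1 : A) ⊗ₜ[ℂ] Δ h) := by
  induction x using TensorProduct.induction_on with
  | zero => simp only [LinearMap.map_zero, LinearEquiv.map_zero, zero_mul]
  | tmul a b =>
      rw [T2_tmul, mapDid_mul, assoc_mul, mul_assoc, Xi_tmul, hΔ b, stepii_5b Δ hco, hco b]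
      simp
  | add x y hx hy => simp only [map_add, hx, hy, add_mul]

lemma sliceR_one_mul (ω : A →ₗ[ℂ] ℂ) (q : A) (v : A ⊗[ℂ] A) :
    sliceR ω ((q ⊗ₜ[ℂ] (1 : A)) * v) = q * sliceR ω v := by
  induction v using TensorProduct.induction_on with
  | zero => simp
  | tmul r s =>
      rw [Algebra.TensorProduct.tmul_mul_tmul, one_mul, sliceR_tmul, sliceR_tmul,
        mul_smul_comm]
  | add x y hx hy => simp only [map_add, mul_add, hx, hy]

lemma stepii_iid (ω : A →ₗ[ℂ] ℂ) (y v : A ⊗[ℂ] A) (b : A) :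
    LinearMap.lTensor A (sliceR ω)
        (TensorProduct.assoc ℂ A A A (y ⊗ₜ[ℂ] (1 : A)) * (b ⊗ₜ[ℂ] v)) =
      y * (b ⊗ₜ[ℂ] sliceR ω v) := by
  induction y using TensorProduct.induction_on with
  | zero => simp only [TensorProduct.zero_tmul, LinearEquiv.map_zero, zero_mul,
      LinearMap.map_zero]
  | tmul p q =>
      rw [TensorProduct.assoc_tmul, Algebra.TensorProduct.tmul_mul_tmul,
        LinearMap.lTensor_tmul, sliceR_one_mul, Algebra.TensorProduct.tmul_mul_tmul]
  | add y1 y2 h1 h2 =>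
      simp only [TensorProduct.add_tmul, LinearEquiv.map_add, add_mul,
        LinearMap.map_add, h1, h2]

lemma stepii_lslice (ω : A →ₗ[ℂ] ℂ) (x : A ⊗[ℂ] A) :
    LinearMap.lTensor A (sliceR ω) (Xi Δ h x) = Psi Δ (sliceR ω (Δ h)) x := by
  induction x using TensorProduct.induction_on with
  | zero => simp only [LinearMap.map_zero]
  | tmul a b => rw [Xi_tmul, stepii_iid, Psi_tmul]
  | add x y hx' hy' => simp only [LinearMap.map_add, hx', hy']

lemma stepii (hΔ : IsCoassoc Δ)
    (hco : ∀ a : A, Δ a * ((1 : A) ⊗ₜ[ℂ] h) = a ⊗ₜ[ℂ] h)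
    (hfaith : leftLegOf (Δ h) = ⊤)
    (x : A ⊗[ℂ] A) (hx : T2 Δ x = 0) (c : A) : Psi Δ c x = 0 := by
  have hXi : Xi Δ h x = 0 := by
    rw [stepii_key Δ hΔ hco, hx]
    simp only [LinearMap.map_zero, LinearEquiv.map_zero, zero_mul]
  have hgen : ∀ ω : A →ₗ[ℂ] ℂ, Psi Δ (sliceR ω (Δ h)) x = 0 := by
    intro ω
    rw [← stepii_lslice Δ ω x, hXi, LinearMap.map_zero]
  let S : Submodule ℂ A :=
    { carrier := {c | Psi Δ c x = 0}
      add_mem' := fun {c1 c2} h1 h2 => by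
        simp only [Set.mem_setOf_eq] at *
        rw [Psi_add, h1, h2, add_zero]
      zero_mem' := by
        simp only [Set.mem_setOf_eq]
        have : Psi Δ ((0:ℂ) • (0:A)) x = (0:ℂ) • Psi Δ 0 x := Psi_smul Δ 0 0 x
        simpa using this
      smul_mem' := fun r c1 h1 => by
        simp only [Set.mem_setOf_eq] at *
        rw [Psi_smul, h1, smul_zero] }
  have hsub : leftLegOf (Δ h) ≤ S := Submodule.span_le.mpr (by
    rintro y ⟨ω, rfl⟩
    exact hgen ω)
  exact hsub (hfaith ▸ Submodule.mem_top)

end StepII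

section StepZ

open TensorProduct LinearMap T2InjAux

variable (Δ : A →ₐ[ℂ] A ⊗[ℂ] A)

/-- `Z(a ⊗ b) = Σ a₁b₁ ⊗ (a₂ ⊗ b₂)`. -/
noncomputable def Zmap : A ⊗[ℂ] A →ₗ[ℂ] A ⊗[ℂ] (A ⊗[ℂ] A) :=
  TensorProduct.map (LinearMap.mul' ℂ A) LinearMap.id ∘ₗ
    (TensorProduct.tensorTensorTensorComm ℂ A A A A).toLinearMap ∘ₗ
      TensorProduct.map Δ.toLinearMap Δ.toLinearMap

@[simp] lemma Zmap_tmul (a b : A) :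
    Zmap Δ (a ⊗ₜ[ℂ] b) =
      TensorProduct.map (LinearMap.mul' ℂ A) LinearMap.id
        (TensorProduct.tensorTensorTensorComm ℂ A A A A (Δ a ⊗ₜ[ℂ] Δ b)) := by
  simp [Zmap]

lemma stepz_zb (ω : A →ₗ[ℂ] ℂ) (y v : A ⊗[ℂ] A) :
    LinearMap.lTensor A (sliceR ω)
        (TensorProduct.map (LinearMap.mul' ℂ A) LinearMap.id
          (TensorProduct.tensorTensorTensorComm ℂ A A A A (y ⊗ₜ[ℂ] v))) =
      y * (sliceR ω v ⊗ₜ[ℂ] (1 : A)) := by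
  induction y using TensorProduct.induction_on with
  | zero => simp only [TensorProduct.zero_tmul, LinearEquiv.map_zero, LinearMap.map_zero,
      zero_mul]
  | tmul p q =>
      induction v using TensorProduct.induction_on with
      | zero => simp only [TensorProduct.tmul_zero, LinearEquiv.map_zero, LinearMap.map_zero,
          TensorProduct.zero_tmul, mul_zero]
      | tmul r s =>
          rw [TensorProduct.tensorTensorTensorComm_tmul, TensorProduct.map_tmul,
            LinearMap.lTensor_tmul, LinearMap.mul'_apply, LinearMap.id_coe, id_eq,
            sliceR_tmul, sliceR_tmul, Algebra.TensorProduct.tmul_mul_tmul, mul_one,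
            mul_smul_comm]
          rw [TensorProduct.smul_tmul]
      | add v1 v2 h1 h2 =>
          simp only [TensorProduct.tmul_add, LinearEquiv.map_add, LinearMap.map_add, h1, h2,
            TensorProduct.add_tmul, mul_add]
  | add y1 y2 h1 h2 =>
      simp only [TensorProduct.add_tmul, LinearEquiv.map_add, LinearMap.map_add, h1, h2,
        add_mul]

lemma stepz_fb (ρ : A →ₗ[ℂ] ℂ) (y v : A ⊗[ℂ] A) :
    LinearMap.lTensor A (sliceL ρ)
        (TensorProduct.map (LinearMap.mul' ℂ A) LinearMap.id
          (TensorProduct.tensorTensorTensorComm ℂ A A A A (y ⊗ₜ[ℂ] v))) =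
      (sliceR ρ y ⊗ₜ[ℂ] (1 : A)) * v := by
  induction y using TensorProduct.induction_on with
  | zero => simp only [TensorProduct.zero_tmul, LinearEquiv.map_zero, LinearMap.map_zero,
      zero_mul]
  | tmul p q =>
      induction v using TensorProduct.induction_on with
      | zero => simp only [TensorProduct.tmul_zero, LinearEquiv.map_zero, LinearMap.map_zero,
          mul_zero]
      | tmul r s =>
          rw [TensorProduct.tensorTensorTensorComm_tmul, TensorProduct.map_tmul,
            LinearMap.lTensor_tmul, LinearMap.mul'_apply, LinearMap.id_coe, id_eq,
            sliceL_tmul, sliceR_tmul, Algebra.TensorProduct.tmul_mul_tmul, one_mul,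
            smul_mul_assoc, TensorProduct.tmul_smul, TensorProduct.smul_tmul']
      | add v1 v2 h1 h2 =>
          simp only [TensorProduct.tmul_add, LinearEquiv.map_add, LinearMap.map_add, h1, h2,
            mul_add]
  | add y1 y2 h1 h2 =>
      simp only [TensorProduct.add_tmul, LinearEquiv.map_add, LinearMap.map_add, h1, h2,
        LinearMap.map_add, TensorProduct.add_tmul, add_mul]

variable {h : A}

lemma stepz_Psi1 (ω : A →ₗ[ℂ] ℂ) (x : A ⊗[ℂ] A) :
    Psi Δ (1 : A) (LinearMap.lTensor A (Sw Δ ω) x) =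
      LinearMap.lTensor A (sliceR ω) (Zmap Δ x) := by
  induction x using TensorProduct.induction_on with
  | zero => simp only [LinearMap.map_zero]
  | tmul a b =>
      rw [LinearMap.lTensor_tmul, Psi_tmul, Sw_apply, Zmap_tmul, stepz_zb]
  | add x y hx hy => simp only [LinearMap.map_add, hx, hy]

lemma stepz_slice3 (ω : A →ₗ[ℂ] ℂ) (w : (A ⊗[ℂ] A) ⊗[ℂ] A) :
    LinearMap.lTensor A (sliceR ω) (TensorProduct.assoc ℂ A A A w) = slr ω w := by
  induction w using TensorProduct.induction_on with
  | zero => simp only [LinearEquiv.map_zero, LinearMap.map_zero]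
  | tmul t r =>
      induction t using TensorProduct.induction_on with
      | zero => simp only [TensorProduct.zero_tmul, LinearEquiv.map_zero,
          LinearMap.map_zero, slr_tmul, smul_zero]
      | tmul p q =>
          rw [TensorProduct.assoc_tmul, LinearMap.lTensor_tmul, sliceR_tmul, slr_tmul,
            TensorProduct.tmul_smul]
      | add t1 t2 h1 h2 =>
          simp only [TensorProduct.add_tmul, LinearEquiv.map_add, LinearMap.map_add, h1, h2]
  | add w1 w2 h1 h2 =>
      simp only [LinearEquiv.map_add, LinearMap.map_add, h1, h2]

lemma stepz (hΔ : IsCoassoc Δ)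
    (hco : ∀ a : A, Δ a * ((1 : A) ⊗ₜ[ℂ] h) = a ⊗ₜ[ℂ] h)
    (hfaith : leftLegOf (Δ h) = ⊤)
    (x : A ⊗[ℂ] A) (hx : T2 Δ x = 0) : Zmap Δ x = 0 := by
  have hslice : ∀ ω : A →ₗ[ℂ] ℂ, LinearMap.lTensor A (sliceR ω) (Zmap Δ x) = 0 := by
    intro ω
    have h1 : T2 Δ (LinearMap.lTensor A (Sw Δ ω) x) = 0 := by
      rw [step1 Δ hΔ ω x, hx]
      simp only [LinearMap.map_zero, LinearEquiv.map_zero]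
    have h2 := stepii Δ hΔ hco hfaith _ h1 (1 : A)
    rw [← stepz_Psi1 Δ ω x, h2]
  have hZu : Zmap Δ x = TensorProduct.assoc ℂ A A A
      ((TensorProduct.assoc ℂ A A A).symm (Zmap Δ x)) :=
    (LinearEquiv.apply_symm_apply _ _).symm
  have h0 : (TensorProduct.assoc ℂ A A A).symm (Zmap Δ x) = 0 := by
    apply slr_sep
    intro ω
    have := hslice ω
    rw [hZu, stepz_slice3 ω] at this
    exact this
  rw [hZu, h0, LinearEquiv.map_zero]

end StepZ

section Final

open TensorProduct LinearMap T2InjAux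

lemma final_key (Δ : A →ₐ[ℂ] A ⊗[ℂ] A) (ρ : A →ₗ[ℂ] ℂ) (x : A ⊗[ℂ] A) :
    T2 Δ (TensorProduct.map (Sw Δ ρ) LinearMap.id x) =
      LinearMap.lTensor A (sliceL ρ) (Zmap Δ x) := by
  induction x using TensorProduct.induction_on with
  | zero => simp only [LinearMap.map_zero]
  | tmul a b =>
      rw [TensorProduct.map_tmul, LinearMap.id_coe, id_eq, T2_tmul, Zmap_tmul,
        stepz_fb, Sw_apply]
  | add x y hx' hy' => simp only [LinearMap.map_add, hx', hy']

lemma final_h3 (Δ : A →ₐ[ℂ] A ⊗[ℂ] A) (hΔ : IsCoassoc Δ) {h : A}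
    (hco : ∀ a : A, Δ a * ((1 : A) ⊗ₜ[ℂ] h) = a ⊗ₜ[ℂ] h)
    (hleg : rightLeg Δ = ⊤) (ρ : A →ₗ[ℂ] ℂ) (x : A ⊗[ℂ] A) :
    TensorProduct.map (LinearMap.mulRight ℂ h) LinearMap.id
        (TensorProduct.map (Sw Δ ρ) LinearMap.id x) = h ⊗ₜ[ℂ] sliceL ρ x := by
  induction x using TensorProduct.induction_on with
  | zero => simp only [LinearMap.map_zero, TensorProduct.tmul_zero]
  | tmul a b =>
      rw [TensorProduct.map_tmul, TensorProduct.map_tmul, sliceL_tmul]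
      simp only [LinearMap.id_coe, id_eq, LinearMap.mulRight_apply, Sw_apply]
      rw [step3 Δ hΔ hco hleg ρ a, TensorProduct.smul_tmul]
  | add x y hx' hy' =>
      simp only [LinearMap.map_add, hx', hy', TensorProduct.tmul_add]

lemma sliceL_eq_sll (ρ : A →ₗ[ℂ] ℂ) (x : A ⊗[ℂ] A) : sliceL ρ x = sll ρ x := by
  induction x using TensorProduct.induction_on with
  | zero => simp only [LinearMap.map_zero]
  | tmul a b => rw [sliceL_tmul, sll_tmul]
  | add x y hx hy => simp only [LinearMap.map_add, hx, hy]

end Final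

/-- If the right leg of `Δ` is all of `A` and `h` is a left cointegral with the left leg of
`Δ(h)` all of `A`, then `T₂ : a ⊗ b ↦ (a ⊗ 1)Δ(b)` is injective. -/
theorem T2_injective_of_left_cointegral
    (Δ : A →ₐ[ℂ] A ⊗[ℂ] A) (hΔ : IsCoassoc Δ) (hleg : rightLeg Δ = ⊤)
    (h : A) (hh : IsLeftCointegral Δ h) (hfaith : leftLegOf (Δ h) = ⊤) :
    Function.Injective (T2 Δ) := by
  open TensorProduct LinearMap T2InjAux in
  obtain ⟨hne, hco⟩ := hh
  have hker : ∀ x : A ⊗[ℂ] A, T2 Δ x = 0 → x = 0 := by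
    intro x hx
    have hz := stepz Δ hΔ hco hfaith x hx
    have hsliceL : ∀ ρ : A →ₗ[ℂ] ℂ, sliceL ρ x = 0 := by
      intro ρ
      have h1 : T2 Δ (TensorProduct.map (Sw Δ ρ) LinearMap.id x) = 0 := by
        rw [final_key Δ ρ x, hz, LinearMap.map_zero]
      have h2 := stepA Δ hΔ hco hleg (TensorProduct.map (Sw Δ ρ) LinearMap.id x)
      rw [h1, zero_mul] at h2
      rw [final_h3 Δ hΔ hco hleg ρ x] at h2
      exact tmul_right_cancel hne _ h2.symm
    apply sll_sep
    intro ρ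
    rw [← sliceL_eq_sll]
    exact hsliceL ρ
  intro x y hxy
  have hs : T2 Δ (x - y) = 0 := by rw [LinearMap.map_sub, hxy, sub_self]
  exact sub_eq_zero.mp (hker _ hs)
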